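/- Let (q_α, h_α, a_α, k₁^α, k₂^α) and (q_β, h_β, a_β, k₁^β, k₂^β) be two ruled-surface Frenet frames: q, h, a : ℝ → ℝ³ differentiable with ‖q‖ = ‖h‖ = 1, a = q × h, and q' = k₁ h, h' = −k₁ q + k₂ a, a' = −k₂ h, where k₁^α, k₁^β are positive. Let φ : ℝ → ℝ be differentiable with φ'(s) > 0 for all s, and suppose q_α(φ(s)) = q_β(s) for all s (the surfaces are similar). Then the asymptotic normals agree, a_α(φ(s)) = a_β(s) for all s; moreover, for every s with k₂^α(φ(s)) ≠ 0, the transformation satisfies φ'(s) = k₂^β(s)/k₂^α(φ(s)). -/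

import Mathlib

open Real

/-- Cross product on `EuclideanSpace ℝ (Fin 3)`. -/
noncomputable def cross3 (u v : EuclideanSpace ℝ (Fin 3)) : EuclideanSpace ℝ (Fin 3) :=
  WithLp.toLp 2 (crossProduct u v)

private lemma inner_dot3 (u v : EuclideanSpace ℝ (Fin 3)) :
    (inner ℝ u v : ℝ) = dotProduct (u : Fin 3 → ℝ) (v : Fin 3 → ℝ) := by
  simp [PiLp.inner_apply, dotProduct, mul_comm]

private lemma inner_self_cross3 (u v : EuclideanSpace ℝ (Fin 3)) :
    (inner ℝ u (cross3 u v) : ℝ) = 0 := by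
  rw [inner_dot3]; exact dot_self_cross u v

private lemma inner_cross3_cross3 (u v : EuclideanSpace ℝ (Fin 3)) :
    (inner ℝ (cross3 u v) (cross3 u v) : ℝ) =
      (inner ℝ u u : ℝ) * (inner ℝ v v : ℝ) - (inner ℝ u v : ℝ) * (inner ℝ v u : ℝ) := by
  simp only [inner_dot3, cross3, WithLp.ofLp_toLp]
  exact cross_dot_cross u v u v

private lemma frame_orth {q h : ℝ → EuclideanSpace ℝ (Fin 3)} {k : ℝ → ℝ}
    (hq : Differentiable ℝ q) (hqn : ∀ s, ‖q s‖ = 1)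
    (hq' : ∀ s, deriv q s = k s • h s) (hk : ∀ s, 0 < k s) (s : ℝ) :
    (inner ℝ (q s) (h s) : ℝ) = 0 := by
  have h1 : HasDerivAt (fun t => (inner ℝ (q t) (q t) : ℝ))
      ((inner ℝ (q s) (deriv q s) : ℝ) + (inner ℝ (deriv q s) (q s) : ℝ)) s :=
    (hq s).hasDerivAt.inner ℝ (hq s).hasDerivAt
  have h2 : (fun t => (inner ℝ (q t) (q t) : ℝ)) = fun _ => (1 : ℝ) := by
    funext t
    rw [real_inner_self_eq_norm_sq, hqn t]; norm_num
  rw [h2] at h1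
  have h3 : (inner ℝ (q s) (deriv q s) : ℝ) + (inner ℝ (deriv q s) (q s) : ℝ) = 0 :=
    h1.unique (hasDerivAt_const s 1)
  rw [hq' s, real_inner_smul_left, real_inner_smul_right, real_inner_comm] at h3
  have hk' := (hk s).ne'
  have : (2 * k s) * (inner ℝ (h s) (q s) : ℝ) = 0 := by linarith
  rcases mul_eq_zero.1 this with h | h
  · exact absurd h (by positivity)
  · rw [real_inner_comm]; exact h

/-- If two ruled surfaces are similar under a variable transformation φ, then their
asymptotic normals agree, and wherever `k₂^α ∘ φ ≠ 0` the transformation satisfies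
`φ' = k₂^β / (k₂^α ∘ φ)`. -/
theorem similar_ruled_surfaces_asymptotic_normals_agree
    (qα hα aα qβ hβ aβ : ℝ → EuclideanSpace ℝ (Fin 3)) (k₁α k₂α k₁β k₂β : ℝ → ℝ)
    (hqα : Differentiable ℝ qα) (hhα : Differentiable ℝ hα) (haα : Differentiable ℝ aα)
    (hqβ : Differentiable ℝ qβ) (hhβ : Differentiable ℝ hβ) (haβ : Differentiable ℝ aβ)
    (hqαn : ∀ t, ‖qα t‖ = 1) (hhαn : ∀ t, ‖hα t‖ = 1)
    (hqβn : ∀ s, ‖qβ s‖ = 1) (hhβn : ∀ s, ‖hβ s‖ = 1)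
    (haαdef : ∀ t, aα t = cross3 (qα t) (hα t))
    (haβdef : ∀ s, aβ s = cross3 (qβ s) (hβ s))
    (hqα' : ∀ t, deriv qα t = k₁α t • hα t)
    (hhα' : ∀ t, deriv hα t = (-(k₁α t)) • qα t + k₂α t • aα t)
    (haα' : ∀ t, deriv aα t = (-(k₂α t)) • hα t)
    (hqβ' : ∀ s, deriv qβ s = k₁β s • hβ s)
    (hhβ' : ∀ s, deriv hβ s = (-(k₁β s)) • qβ s + k₂β s • aβ s)
    (haβ' : ∀ s, deriv aβ s = (-(k₂β s)) • hβ s)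
    (hk₁α : ∀ t, 0 < k₁α t) (hk₁β : ∀ s, 0 < k₁β s)
    (φ : ℝ → ℝ) (hφ : Differentiable ℝ φ) (hφ' : ∀ s, 0 < deriv φ s)
    (hsim : ∀ s, qα (φ s) = qβ s) :
    (∀ s, aα (φ s) = aβ s) ∧
      (∀ s, k₂α (φ s) ≠ 0 → deriv φ s = k₂β s / k₂α (φ s)) := by
  -- orthogonality and normalization facts for the β frame
  have horth : ∀ s, (inner ℝ (qβ s) (hβ s) : ℝ) = 0 := frame_orth hqβ hqβn hqβ' hk₁β
  have hqa : ∀ s, (inner ℝ (qβ s) (aβ s) : ℝ) = 0 := by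
    intro s; rw [haβdef s]; exact inner_self_cross3 _ _
  have haa : ∀ s, (inner ℝ (aβ s) (aβ s) : ℝ) = 1 := by
    intro s
    have h0 : (inner ℝ (hβ s) (qβ s) : ℝ) = 0 := by
      rw [real_inner_comm]; exact horth s
    rw [haβdef s, inner_cross3_cross3, real_inner_self_eq_norm_sq,
      real_inner_self_eq_norm_sq, hqβn s, hhβn s, horth s, h0]
    norm_num
  -- step 1: chain rule on qα ∘ φ = qβ
  have hstep1 : ∀ s, hα (φ s) = hβ s := by
    intro s
    have hcomp : (qα ∘ φ) = qβ := funext hsim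
    have hc : deriv (qα ∘ φ) s = deriv φ s • deriv qα (φ s) :=
      deriv.scomp s (hqα (φ s)) (hφ s)
    rw [hcomp, hqβ' s, hqα' (φ s), smul_smul] at hc
    have hco : (deriv φ s * k₁α (φ s)) = k₁β s := by
      have := congrArg norm hc
      rw [norm_smul, norm_smul, hhαn, hhβn, Real.norm_eq_abs, Real.norm_eq_abs,
        abs_of_pos (hk₁β s), abs_of_pos (mul_pos (hφ' s) (hk₁α (φ s)))] at this
      have := this.symm
      simpa using this
    rw [hco] at hc
    exact smul_right_injective _ (hk₁β s).ne' hc.symm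
  have hstepa : ∀ s, aα (φ s) = aβ s := by
    intro s
    rw [haαdef, haβdef, hsim s, hstep1 s]
  refine ⟨hstepa, fun s hk2 => ?_⟩
  -- step 2: chain rule on hα ∘ φ = hβ
  have hcomp : (hα ∘ φ) = hβ := funext hstep1
  have hc : deriv (hα ∘ φ) s = deriv φ s • deriv hα (φ s) :=
    deriv.scomp s (hhα (φ s)) (hφ s)
  rw [hcomp, hhβ' s, hhα' (φ s), hsim s, hstepa s] at hc
  have hinner := congrArg (fun v => (inner ℝ v (aβ s) : ℝ)) hc
  simp only [inner_add_left, real_inner_smul_left, smul_add, smul_smul] at hinner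
  rw [hqa s, real_inner_comm (aβ s), haa s] at hinner
  have hmain : k₂β s = deriv φ s * k₂α (φ s) := by
    linarith [hinner]
  rw [hmain]
  field_simp
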